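/- Every monoid homomorphism between two Puiseux monoids is given by multiplication by a nonnegative rational number: if M and N are additive submonoids of Q_{\ge 0} and f : M → N is an additive map with f(0) = 0, then there exists q ∈ Q_{\ge 0} such that f(x) = qx for all x ∈ M. -/
import Mathlib


open scoped BigOperators

/-- A Puiseux monoid: an additive submonoid of ℚ consisting of nonnegative elements. -/
def IsPuiseux (M : AddSubmonoid ℚ) : Prop := ∀ x ∈ M, (0:ℚ) ≤ x

/-- `a` is an atom of the submonoid `S`. -/
def IsAtomOf {α : Type*} [AddCommMonoid α] (S : AddSubmonoid α) (a : α) : Prop :=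
  a ∈ S ∧ a ≠ 0 ∧ ∀ u v : α, u ∈ S → v ∈ S → a = u + v → u = 0 ∨ v = 0

/-- `x` has a factorization of length `n` into atoms of `S`. -/
def IsLengthOf {α : Type*} [AddCommMonoid α] (S : AddSubmonoid α) (x : α) (n : ℕ) : Prop :=
  ∃ f : Fin n → α, (∀ i, IsAtomOf S (f i)) ∧ x = ∑ i, f i

/-- The set of lengths of `x` in `S`. -/
def lengthsOf {α : Type*} [AddCommMonoid α] (S : AddSubmonoid α) (x : α) : Set ℕ :=
  {n | IsLengthOf S x n}

/-- `S` is atomic: every nonzero element is a finite sum of atoms. -/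
def AtomicM {α : Type*} [AddCommMonoid α] (S : AddSubmonoid α) : Prop :=
  ∀ x ∈ S, x ≠ 0 → ∃ n : ℕ, IsLengthOf S x n

/-- The system of sets of lengths of `M`. -/
def systemOfLengths (M : AddSubmonoid ℚ) : Set (Set ℕ) :=
  {S | ∃ x ∈ M, lengthsOf M x = S}

/-- The elementary Puiseux monoid ⟨1/p : p prime⟩. -/
def elemPM : AddSubmonoid ℚ :=
  AddSubmonoid.closure {q : ℚ | ∃ p : ℕ, p.Prime ∧ q = 1 / p}

/-- Every additive monoid homomorphism between Puiseux monoids is multiplication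
by a nonnegative rational. -/
theorem stmt2 (M N : AddSubmonoid ℚ) (hM : IsPuiseux M) (hN : IsPuiseux N)
    (f : M →+ N) :
    ∃ q : ℚ, 0 ≤ q ∧ ∀ x : M, ((f x : ℚ)) = q * (x : ℚ) := by
  by_cases h : ∀ x : M, (x : ℚ) = 0
  · refine ⟨0, le_refl 0, fun x => ?_⟩
    have hx : x = 0 := Subtype.ext (h x)
    rw [hx, map_zero]
    simp
  · push_neg at h
    obtain ⟨a, ha⟩ := h
    have hapos : (0:ℚ) < (a:ℚ) := lt_of_le_of_ne (hM a a.2) (Ne.symm ha)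
    have hfa : (0:ℚ) ≤ ((f a : ℚ)) := hN _ (f a).2
    refine ⟨(f a : ℚ) / (a : ℚ), div_nonneg hfa hapos.le, fun x => ?_⟩
    by_cases hx0 : (x : ℚ) = 0
    · have : x = 0 := Subtype.ext hx0
      rw [this, map_zero]
      simp
    · have hxpos : (0:ℚ) < (x:ℚ) := lt_of_le_of_ne (hM x x.2) (Ne.symm hx0)
      -- key identity: a * f x = x * f a
      set m : ℕ := (x:ℚ).den * (a:ℚ).num.toNat with hm
      set n : ℕ := (x:ℚ).num.toNat * (a:ℚ).den with hn
      have hxnum : ((x:ℚ).num.toNat : ℚ) = ((x:ℚ).num : ℚ) := by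
        norm_cast
        exact Int.toNat_of_nonneg (Rat.num_nonneg.mpr hxpos.le)
      have hanum : ((a:ℚ).num.toNat : ℚ) = ((a:ℚ).num : ℚ) := by
        norm_cast
        exact Int.toNat_of_nonneg (Rat.num_nonneg.mpr hapos.le)
      have key : (m : ℚ) * (x:ℚ) = (n : ℚ) * (a:ℚ) := by
        have hx' : ((x:ℚ).den : ℚ) * (x:ℚ) = ((x:ℚ).num : ℚ) := by
          rw [mul_comm]; exact_mod_cast Rat.mul_den_eq_num (x:ℚ)
        have ha' : ((a:ℚ).den : ℚ) * (a:ℚ) = ((a:ℚ).num : ℚ) := by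
          rw [mul_comm]; exact_mod_cast Rat.mul_den_eq_num (a:ℚ)
        push_cast [hm, hn]
        rw [hxnum, hanum, mul_comm ((x:ℚ).den : ℚ) _, mul_assoc, hx',
          mul_assoc, ha']
        ring
      have hmx : m • x = n • a := by
        apply Subtype.ext
        push_cast
        rw [nsmul_eq_mul, nsmul_eq_mul]
        exact key
      have hmfx : (m : ℚ) * ((f x : ℚ)) = (n : ℚ) * ((f a : ℚ)) := by
        have := congrArg f hmx
        rw [map_nsmul, map_nsmul] at this
        have := congrArg (Subtype.val) this
        push_cast at this
        rw [nsmul_eq_mul, nsmul_eq_mul] at this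
        exact this
      have hmpos : (0:ℚ) < (m : ℚ) := by
        have hd : 0 < ((x:ℚ).den : ℚ) := by exact_mod_cast (x:ℚ).den_pos
        have hn2 : (0:ℚ) < ((a:ℚ).num.toNat : ℚ) := by
          rw [hanum]; exact_mod_cast Rat.num_pos.mpr hapos
        push_cast [hm]
        positivity
      have habfx : (a:ℚ) * ((f x : ℚ)) = (x:ℚ) * ((f a : ℚ)) := by
        have : (m:ℚ) * ((a:ℚ) * ((f x : ℚ))) = (m:ℚ) * ((x:ℚ) * ((f a : ℚ))) := by
          calc (m:ℚ) * ((a:ℚ) * ((f x : ℚ))) = (a:ℚ) * ((m:ℚ) * ((f x : ℚ))) := by ring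
            _ = (a:ℚ) * ((n:ℚ) * ((f a : ℚ))) := by rw [hmfx]
            _ = ((n:ℚ) * (a:ℚ)) * ((f a : ℚ)) := by ring
            _ = ((m:ℚ) * (x:ℚ)) * ((f a : ℚ)) := by rw [key]
            _ = (m:ℚ) * ((x:ℚ) * ((f a : ℚ))) := by ring
        exact mul_left_cancel₀ hmpos.ne' this
      field_simp
      linarith [habfx]
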